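/- Let w : ℤ → ℂ ∪ {∞} satisfy w(z+1) + w(z-1) = (a₁(z) w(z) + a₀(z))/(1 - w(z)²) wherever defined, and define U(z) = (w(z) - 1)(w(z+1) + 1). Then (U(z-1) + U(z) + a₁(z)) w(z) = U(z-1) - U(z) - a₀(z) at every z where w(z) is finite and w(z)² ≠ 1. -/
import Mathlib

/-- If `w` satisfies `w(z+1) + w(z-1) = (a₁ w + a₀)/(1 - w²)` wherever
`w(z)² ≠ 1`, and `U(z) = (w(z) - 1)(w(z+1) + 1)`, then
`(U(z-1) + U(z) + a₁(z)) w(z) = U(z-1) - U(z) - a₀(z)` at each such point. -/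
theorem stmt_12 (a₀ a₁ w U : ℤ → ℂ)
    (heq : ∀ z : ℤ, (w z) ^ 2 ≠ 1 →
      w (z + 1) + w (z - 1) = (a₁ z * w z + a₀ z) / (1 - (w z) ^ 2))
    (hU : ∀ z : ℤ, U z = (w z - 1) * (w (z + 1) + 1)) :
    ∀ z : ℤ, (w z) ^ 2 ≠ 1 →
      (U (z - 1) + U z + a₁ z) * w z = U (z - 1) - U z - a₀ z := by
  intro z hz
  have hden : 1 - (w z) ^ 2 ≠ 0 := by
    intro h; apply hz; linear_combination -h
  have h := heq z hz
  have h' : (w (z + 1) + w (z - 1)) * (1 - (w z) ^ 2) = a₁ z * w z + a₀ z := by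
    field_simp at h; exact h
  rw [hU (z - 1), hU z, sub_add_cancel]
  linear_combination -h'
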